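/- Let π and π′ be permutations of [M], let Π = ∑_{x : π(x) ≠ π′(x)} |x⟩⟨x|, and for a state |φ⟩ over q query registers let Π_j denote Π acting on register j and p_j = ⟨φ|Π_j|φ⟩. Then ‖(O_π^{⊗q} − O_{π′}^{⊗q})|φ⟩‖ ≤ 2√(∑_{j∈[q]} p_j), where O_σ|x⟩ = |σ(x)⟩ is the in-place permutation oracle. -/
import Mathlib

/-- Parallel-query hybrid method: for permutations `π, π'` of `[M]`, the in-place
oracles applied in parallel to `q` query registers of a state `φ` satisfy
`‖(O_π^{⊗q} − O_{π'}^{⊗q})|φ⟩‖ ≤ 2√(∑_j p_j)`, where `p_j` is the weight of the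
`j`-th query register on points where `π` and `π'` disagree.
States on `q` registers of dimension `M` are represented as functions
`(Fin q → Fin M) → ℂ`, and `O_σ^{⊗q}` maps `ψ` to `y ↦ ψ (σ⁻¹ ∘ y)`
(i.e. `O_σ|x⟩ = |σ(x)⟩` on basis states). -/
theorem stmt_4 (M q : ℕ) (σ σ' : Equiv.Perm (Fin M))
    (φ : (Fin q → Fin M) → ℂ) (hφ : ∑ v : Fin q → Fin M, ‖φ v‖ ^ 2 = 1) :
    Real.sqrt (∑ v : Fin q → Fin M, ‖φ (fun j => σ.symm (v j)) - φ (fun j => σ'.symm (v j))‖ ^ 2)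
      ≤ 2 * Real.sqrt (∑ j : Fin q,
          ∑ v ∈ Finset.univ.filter (fun v : Fin q → Fin M => σ (v j) ≠ σ' (v j)),
            ‖φ v‖ ^ 2) := by
  classical
  set P := ∑ j : Fin q, ∑ v ∈ Finset.univ.filter
      (fun v : Fin q → Fin M => σ (v j) ≠ σ' (v j)), ‖φ v‖ ^ 2 with hPdef
  have hP0 : 0 ≤ P := by
    apply Finset.sum_nonneg; intro j _; apply Finset.sum_nonneg; intro v _; positivity
  set B := ∑ w : Fin q → Fin M, (if ∃ j, σ (w j) ≠ σ' (w j) then ‖φ w‖ ^ 2 else 0) with hBdef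
  have hBP : B ≤ P := by
    rw [hBdef, hPdef]
    have hpt : ∀ w : Fin q → Fin M,
        (if ∃ j, σ (w j) ≠ σ' (w j) then ‖φ w‖ ^ 2 else 0)
          ≤ ∑ j : Fin q, (if σ (w j) ≠ σ' (w j) then ‖φ w‖ ^ 2 else 0) := by
      intro w
      by_cases h : ∃ j, σ (w j) ≠ σ' (w j)
      · rw [if_pos h]
        obtain ⟨j0, hj0⟩ := h
        have := Finset.single_le_sum
          (f := fun j => if σ (w j) ≠ σ' (w j) then ‖φ w‖ ^ 2 else 0)
          (fun i _ => by positivity) (Finset.mem_univ j0)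
        simpa [if_pos hj0] using this
      · rw [if_neg h]
        exact Finset.sum_nonneg fun i _ => by positivity
    calc ∑ w : Fin q → Fin M, (if ∃ j, σ (w j) ≠ σ' (w j) then ‖φ w‖ ^ 2 else 0)
        ≤ ∑ w : Fin q → Fin M, ∑ j : Fin q,
            (if σ (w j) ≠ σ' (w j) then ‖φ w‖ ^ 2 else 0) :=
          Finset.sum_le_sum fun w _ => hpt w
      _ = ∑ j : Fin q, ∑ w : Fin q → Fin M,
            (if σ (w j) ≠ σ' (w j) then ‖φ w‖ ^ 2 else 0) := Finset.sum_comm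
      _ = _ := Finset.sum_congr rfl fun j _ => (Finset.sum_filter _ _).symm
  have hB0 : 0 ≤ B := by
    apply Finset.sum_nonneg; intro w _
    by_cases h : ∃ j, σ (w j) ≠ σ' (w j) <;> simp [h] <;> positivity
  have key : (∑ v : Fin q → Fin M,
      ‖φ (fun j => σ.symm (v j)) - φ (fun j => σ'.symm (v j))‖ ^ 2) ≤ 4 * P := by
    have step1 : ∀ v : Fin q → Fin M,
        ‖φ (fun j => σ.symm (v j)) - φ (fun j => σ'.symm (v j))‖ ^ 2
          ≤ (if ∃ j, σ.symm (v j) ≠ σ'.symm (v j)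
              then 2 * ‖φ (fun j => σ.symm (v j))‖ ^ 2 else 0)
            + (if ∃ j, σ.symm (v j) ≠ σ'.symm (v j)
              then 2 * ‖φ (fun j => σ'.symm (v j))‖ ^ 2 else 0) := by
      intro v
      by_cases h : ∃ j, σ.symm (v j) ≠ σ'.symm (v j)
      · rw [if_pos h, if_pos h]
        have h1 := norm_sub_le (φ (fun j => σ.symm (v j))) (φ (fun j => σ'.symm (v j)))
        nlinarith [sq_nonneg (‖φ (fun j => σ.symm (v j))‖ - ‖φ (fun j => σ'.symm (v j))‖),
          norm_nonneg (φ (fun j => σ.symm (v j)) - φ (fun j => σ'.symm (v j))),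
          norm_nonneg (φ (fun j => σ.symm (v j))), norm_nonneg (φ (fun j => σ'.symm (v j)))]
      · rw [if_neg h, if_neg h]
        push_neg at h
        have he : (fun j => σ.symm (v j)) = (fun j => σ'.symm (v j)) := funext fun j => h j
        rw [he, sub_self]
        simp
    have hiff1 : ∀ x : Fin M, (σ.symm x ≠ σ'.symm x ↔ x ≠ σ' (σ.symm x)) := by
      intro x
      rw [not_iff_not]
      constructor
      · intro h; rw [h, Equiv.apply_symm_apply]
      · intro h
        have := congrArg σ'.symm h
        simpa using this.symm
    have hiff2 : ∀ x : Fin M, (σ.symm x ≠ σ'.symm x ↔ σ (σ'.symm x) ≠ x) := by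
      intro x
      rw [not_iff_not]
      constructor
      · intro h; rw [← h, Equiv.apply_symm_apply]
      · intro h
        simpa using (congrArg σ.symm h).symm
    have sum1 : (∑ v : Fin q → Fin M, (if ∃ j, σ.symm (v j) ≠ σ'.symm (v j)
          then 2 * ‖φ (fun j => σ.symm (v j))‖ ^ 2 else 0)) = 2 * B := by
      rw [hBdef, Finset.mul_sum]
      apply Fintype.sum_equiv (Equiv.piCongrRight fun _ : Fin q => σ.symm)
      intro v
      have harg : (Equiv.piCongrRight fun _ : Fin q => σ.symm) v
          = fun j => σ.symm (v j) := rfl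
      rw [harg]
      simp only [Equiv.apply_symm_apply]
      rw [if_congr (exists_congr fun j => hiff1 (v j)) rfl rfl]
      split_ifs <;> ring
    have sum2 : (∑ v : Fin q → Fin M, (if ∃ j, σ.symm (v j) ≠ σ'.symm (v j)
          then 2 * ‖φ (fun j => σ'.symm (v j))‖ ^ 2 else 0)) = 2 * B := by
      rw [hBdef, Finset.mul_sum]
      apply Fintype.sum_equiv (Equiv.piCongrRight fun _ : Fin q => σ'.symm)
      intro v
      have harg : (Equiv.piCongrRight fun _ : Fin q => σ'.symm) v
          = fun j => σ'.symm (v j) := rfl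
      rw [harg]
      simp only [Equiv.apply_symm_apply]
      rw [if_congr (exists_congr fun j => hiff2 (v j)) rfl rfl]
      split_ifs <;> ring
    calc (∑ v : Fin q → Fin M,
          ‖φ (fun j => σ.symm (v j)) - φ (fun j => σ'.symm (v j))‖ ^ 2)
        ≤ ∑ v : Fin q → Fin M,
            ((if ∃ j, σ.symm (v j) ≠ σ'.symm (v j)
                then 2 * ‖φ (fun j => σ.symm (v j))‖ ^ 2 else 0)
              + (if ∃ j, σ.symm (v j) ≠ σ'.symm (v j)
                then 2 * ‖φ (fun j => σ'.symm (v j))‖ ^ 2 else 0)) :=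
          Finset.sum_le_sum fun v _ => step1 v
      _ = 2 * B + 2 * B := by rw [Finset.sum_add_distrib, sum1, sum2]
      _ ≤ 4 * P := by linarith
  calc Real.sqrt (∑ v : Fin q → Fin M,
        ‖φ (fun j => σ.symm (v j)) - φ (fun j => σ'.symm (v j))‖ ^ 2)
      ≤ Real.sqrt (4 * P) := Real.sqrt_le_sqrt key
    _ = 2 * Real.sqrt P := by
        rw [show (4:ℝ) = 2 ^ 2 by norm_num, Real.sqrt_mul (by positivity),
          Real.sqrt_sq (by norm_num)]
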